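/- If ∏_{i=1}^{k} sinh(n_i x)/sinh(m_i x) ≡ 1 for all x > 0, where all n_i, m_i are nonzero reals, then the multiset {n_1,...,n_k} equals the multiset {ε_1 m_1,...,ε_k m_k} for some signs ε_i ∈ {±1} with ∏_{i=1}^k ε_i = 1. -/

import Mathlib

open Filter Topology

-- min of multiset
lemma ms_min (s : Multiset ℝ) (hs : s ≠ 0) : ∃ c ∈ s, ∀ y ∈ s, c ≤ y := by
  induction s using Multiset.induction_on with
  | empty => simp at hs
  | cons a t ih =>
    rcases eq_or_ne t 0 with rfl | ht
    · exact ⟨a, by simp⟩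
    · obtain ⟨c, hc, hcle⟩ := ih ht
      refine ⟨min a c, ?_, ?_⟩
      · rcases le_total a c with h | h
        · simp [min_eq_left h]
        · simp [min_eq_right h, Multiset.mem_cons_of_mem hc]
      · intro y hy
        rcases Multiset.mem_cons.1 hy with rfl | hy
        · exact min_le_left _ _
        · exact le_trans (min_le_right _ _) (hcle y hy)

-- log of multiset product
lemma ms_log_prod (s : Multiset ℝ) (h : ∀ y ∈ s, 0 < y) :
    Real.log s.prod = (s.map Real.log).sum := by
  induction s using Multiset.induction_on with
  | empty => simp
  | cons a t ih =>
    simp only [Multiset.prod_cons, Multiset.map_cons, Multiset.sum_cons]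
    rw [Real.log_mul (ne_of_gt (h a (Multiset.mem_cons_self a t)))
      (ne_of_gt (Multiset.prod_pos fun y hy => h y (Multiset.mem_cons_of_mem hy)))]
    rw [ih fun y hy => h y (Multiset.mem_cons_of_mem hy)]

-- tendsto of multiset sum
lemma ms_tendsto_sum (s : Multiset ℝ) (f : ℝ → ℝ → ℝ) (L : ℝ → ℝ) (l : Filter ℝ)
    (h : ∀ a ∈ s, Tendsto (f a) l (𝓝 (L a))) :
    Tendsto (fun t => (s.map (fun a => f a t)).sum) l (𝓝 ((s.map L).sum)) := by
  induction s using Multiset.induction_on with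
  | empty => simpa using tendsto_const_nhds
  | cons a t ih =>
    simp only [Multiset.map_cons, Multiset.sum_cons]
    exact ((h a (Multiset.mem_cons_self a t)).add
      (ih fun b hb => h b (Multiset.mem_cons_of_mem hb)))

lemma ms_tendsto_prod (s : Multiset ℝ) (f : ℝ → ℝ → ℝ) (L : ℝ → ℝ) (l : Filter ℝ)
    (h : ∀ a ∈ s, Tendsto (f a) l (𝓝 (L a))) :
    Tendsto (fun t => (s.map (fun a => f a t)).prod) l (𝓝 ((s.map L).prod)) := by
  induction s using Multiset.induction_on with
  | empty => simpa using tendsto_const_nhds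
  | cons a t ih =>
    simp only [Multiset.map_cons, Multiset.prod_cons]
    exact ((h a (Multiset.mem_cons_self a t)).mul
      (ih fun b hb => h b (Multiset.mem_cons_of_mem hb)))

-- indicator sum = count
lemma ms_count_sum (s : Multiset ℝ) (c : ℝ) :
    (s.map (fun a => if a = c then (1:ℝ) else 0)).sum = s.count c := by
  induction s using Multiset.induction_on with
  | empty => simp
  | cons a t ih =>
    simp only [Multiset.map_cons, Multiset.sum_cons, ih, Multiset.count_cons]
    rcases eq_or_ne a c with rfl | h
    · simp [add_comm]
    · simp [h, Ne.symm h]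


-- t^a → 0 as t → 0+ (a > 0), staying positive
lemma rpow_tendsto_zero {a : ℝ} (ha : 0 < a) :
    Tendsto (fun t : ℝ => t ^ a) (𝓝[>] 0) (𝓝 0) := by
  have h1 : Tendsto (fun t : ℝ => Real.exp (a * Real.log t)) (𝓝[>] 0) (𝓝 0) := by
    apply Real.tendsto_exp_atBot.comp
    exact (Real.tendsto_log_nhdsGT_zero.const_mul_atBot ha)
  refine h1.congr' ?_
  filter_upwards [self_mem_nhdsWithin] with t ht
  rw [Real.rpow_def_of_pos ht, mul_comm]

lemma rpow_tendsto_zero' {a : ℝ} (ha : 0 < a) :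
    Tendsto (fun t : ℝ => t ^ a) (𝓝[>] 0) (𝓝[>] 0) := by
  rw [tendsto_nhdsWithin_iff]
  refine ⟨rpow_tendsto_zero ha, ?_⟩
  filter_upwards [self_mem_nhdsWithin] with t ht
  exact Real.rpow_pos_of_pos ht a

-- -log(1-u)/u → 1 as u → 0 (within ≠ 0)
lemma log_one_sub_div : Tendsto (fun u : ℝ => -Real.log (1 - u) / u) (𝓝[≠] 0) (𝓝 1) := by
  have hd : HasDerivAt (fun u : ℝ => Real.log (1 - u)) (-1) 0 := by
    have h1 : HasDerivAt (fun u : ℝ => 1 - u) (-1) 0 := by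
      simpa using (hasDerivAt_id (0:ℝ)).const_sub 1
    have h2 := (Real.hasDerivAt_log (by norm_num : (1:ℝ) - 0 ≠ 0)).comp 0 h1
    simp at h2
    exact h2
  have := hasDerivAt_iff_tendsto_slope.1 hd
  have h3 : Tendsto (fun u : ℝ => -(Real.log (1 - u) / u)) (𝓝[≠] 0) (𝓝 1) := by
    have := this.neg
    simp only [neg_neg] at this
    refine this.congr' ?_
    filter_upwards [self_mem_nhdsWithin] with u hu
    simp [slope_def_field, sub_zero]
  refine h3.congr fun u => by rw [neg_div]

-- the per-term limit
lemma term_tendsto {c a : ℝ} (hc : 0 < c) (hca : c ≤ a) :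
    Tendsto (fun t : ℝ => -Real.log (1 - t ^ a) / t ^ c) (𝓝[>] 0)
      (𝓝 (if a = c then 1 else 0)) := by
  have ha : 0 < a := lt_of_lt_of_le hc hca
  have hg : Tendsto (fun t : ℝ => -Real.log (1 - t ^ a) / t ^ a) (𝓝[>] 0) (𝓝 1) := by
    refine log_one_sub_div.comp ((rpow_tendsto_zero' ha).mono_right ?_)
    exact nhdsWithin_mono _ fun x hx => ne_of_gt hx
  have hpow : Tendsto (fun t : ℝ => t ^ (a - c)) (𝓝[>] 0) (𝓝 (if a = c then 1 else 0)) := by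
    rcases eq_or_ne a c with rfl | hac
    · simpa using tendsto_const_nhds.congr'
        (by filter_upwards [self_mem_nhdsWithin] with t ht; simp [Real.rpow_zero])
    · simp only [if_neg hac]
      exact rpow_tendsto_zero (sub_pos.2 (lt_of_le_of_ne hca (Ne.symm hac)))
  have := hg.mul hpow
  rw [one_mul] at this
  refine this.congr' ?_
  filter_upwards [self_mem_nhdsWithin] with t ht
  have h1 : t ^ a ≠ 0 := ne_of_gt (Real.rpow_pos_of_pos ht a)
  have h2 : t ^ c ≠ 0 := ne_of_gt (Real.rpow_pos_of_pos ht c)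
  have h3 : t ^ (a - c) = t ^ a / t ^ c := Real.rpow_sub ht a c
  rw [h3]
  field_simp


lemma ms_sum_div (s : Multiset ℝ) (f : ℝ → ℝ) (r : ℝ) :
    (s.map (fun a => f a / r)).sum = (s.map f).sum / r := by
  induction s using Multiset.induction_on with
  | empty => simp
  | cons a t ih => simp [ih, add_div]

lemma ms_sum_neg (s : Multiset ℝ) (f : ℝ → ℝ) :
    (s.map (fun a => -f a)).sum = -(s.map f).sum := by
  induction s using Multiset.induction_on with
  | empty => simp
  | cons a t ih => simp [ih]; ring

lemma key : ∀ N : ℕ, ∀ A B : Multiset ℝ, A.card + B.card ≤ N →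
    (∀ a ∈ A, 0 < a) → (∀ b ∈ B, 0 < b) →
    (∀ t ∈ Set.Ioo (0:ℝ) 1,
      (A.map (fun a => 1 - t ^ a)).prod = (B.map (fun a => 1 - t ^ a)).prod) →
    A = B := by
  intro N
  induction N with
  | zero =>
    intro A B hcard _ _ _
    have hA : A = 0 := Multiset.card_eq_zero.1 (Nat.le_zero.1 (le_trans (Nat.le_add_right _ _) hcard))
    have hB : B = 0 := Multiset.card_eq_zero.1 (Nat.le_zero.1 (le_trans (Nat.le_add_left _ _) hcard))
    rw [hA, hB]
  | succ N ih =>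
    intro A B hcard hA hB hprod
    rcases eq_or_ne (A + B) 0 with h0 | h0
    · have hA0 : A = 0 := Multiset.le_zero.1 (h0 ▸ Multiset.le_add_right A B)
      have hB0 : B = 0 := Multiset.le_zero.1 (h0 ▸ Multiset.le_add_left B A)
      rw [hA0, hB0]
    · obtain ⟨c, hcmem, hcle⟩ := ms_min (A + B) h0
      have hcpos : 0 < c := by
        rcases Multiset.mem_add.1 hcmem with h | h
        · exact hA c h
        · exact hB c h
      -- factors positive
      have hfac : ∀ (s : Multiset ℝ), (∀ a ∈ s, 0 < a) → ∀ t ∈ Set.Ioo (0:ℝ) 1,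
          ∀ y ∈ s.map (fun a => 1 - t ^ a), 0 < y := by
        intro s hs t ht y hy
        obtain ⟨a, ha, rfl⟩ := Multiset.mem_map.1 hy
        have : t ^ a < 1 := Real.rpow_lt_one (le_of_lt ht.1) ht.2 (hs a ha)
        linarith
      -- the phi functions
      set φ : Multiset ℝ → ℝ → ℝ :=
        fun s t => (s.map (fun a => -Real.log (1 - t ^ a) / t ^ c)).sum with hφ
      have hφeq : ∀ (s : Multiset ℝ), (∀ a ∈ s, 0 < a) → ∀ t ∈ Set.Ioo (0:ℝ) 1,
          φ s t = -(Real.log ((s.map (fun a => 1 - t ^ a)).prod)) / t ^ c := by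
        intro s hs t ht
        simp only [hφ]
        rw [ms_sum_div s (fun a => -Real.log (1 - t ^ a)) (t ^ c),
          ms_sum_neg s (fun a => Real.log (1 - t ^ a))]
        congr 1
        rw [ms_log_prod _ (hfac s hs t ht), Multiset.map_map]
        rfl
      -- limits
      have hlim : ∀ (s : Multiset ℝ), (∀ a ∈ s, 0 < a) → (∀ a ∈ s, c ≤ a) →
          Tendsto (φ s) (𝓝[>] (0:ℝ)) (𝓝 (s.count c)) := by
        intro s hs hle
        have := ms_tendsto_sum s (fun a t => -Real.log (1 - t ^ a) / t ^ c)
          (fun a => if a = c then 1 else 0) (𝓝[>] (0:ℝ))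
          (fun a ha => term_tendsto hcpos (hle a ha))
        rwa [ms_count_sum] at this
      have hAle : ∀ a ∈ A, c ≤ a := fun a ha => hcle a (Multiset.mem_add.2 (Or.inl ha))
      have hBle : ∀ b ∈ B, c ≤ b := fun b hb => hcle b (Multiset.mem_add.2 (Or.inr hb))
      have hAlim := hlim A hA hAle
      have hBlim := hlim B hB hBle
      have heq : φ A =ᶠ[𝓝[>] (0:ℝ)] φ B := by
        filter_upwards [Ioo_mem_nhdsGT_of_mem (by simp : (0:ℝ) ∈ Set.Ico (0:ℝ) 1)] with t ht
        rw [hφeq A hA t ht, hφeq B hB t ht, hprod t ht]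
      have hcount : (A.count c : ℝ) = B.count c :=
        tendsto_nhds_unique (hAlim.congr' heq) hBlim
      have hcount' : A.count c = B.count c := Nat.cast_injective hcount
      -- c belongs to both
      have hmemboth : c ∈ A ∧ c ∈ B := by
        rcases Multiset.mem_add.1 hcmem with h | h
        · refine ⟨h, ?_⟩
          rw [← Multiset.count_pos, ← hcount', Multiset.count_pos]
          exact h
        · refine ⟨?_, h⟩
          rw [← Multiset.count_pos, hcount', Multiset.count_pos]
          exact h
      obtain ⟨A', rfl⟩ := Multiset.exists_cons_of_mem hmemboth.1
      obtain ⟨B', rfl⟩ := Multiset.exists_cons_of_mem hmemboth.2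
      have hA' : ∀ a ∈ A', 0 < a := fun a ha => hA a (Multiset.mem_cons_of_mem ha)
      have hB' : ∀ b ∈ B', 0 < b := fun b hb => hB b (Multiset.mem_cons_of_mem hb)
      have hcard' : Multiset.card A' + Multiset.card B' ≤ N := by
        simp only [Multiset.card_cons] at hcard
        omega
      have : A' = B' := by
        refine ih A' B' hcard' hA' hB' ?_
        intro t ht
        have h := hprod t ht
        simp only [Multiset.map_cons, Multiset.prod_cons] at h
        have hne : (1 : ℝ) - t ^ c ≠ 0 := by
          have : t ^ c < 1 := Real.rpow_lt_one (le_of_lt ht.1) ht.2 hcpos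
          linarith
        exact mul_left_cancel₀ hne h
      rw [this]


lemma ms_prod_mul (s : Multiset ℝ) (f g : ℝ → ℝ) :
    (s.map (fun a => f a * g a)).prod = (s.map f).prod * (s.map g).prod := by
  induction s using Multiset.induction_on with
  | empty => simp
  | cons a t ih => simp [ih]; ring

lemma ms_sum_mulr (s : Multiset ℝ) (f : ℝ → ℝ) (r : ℝ) :
    (s.map (fun a => f a * r)).sum = (s.map f).sum * r := by
  induction s using Multiset.induction_on with
  | empty => simp
  | cons a t ih => simp [ih]; ring

lemma ms_rpow_sum (s : Multiset ℝ) (t : ℝ) (ht : 0 < t) (f : ℝ → ℝ) :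
    (s.map (fun a => t ^ (f a))).prod = t ^ ((s.map f).sum) := by
  induction s using Multiset.induction_on with
  | empty => simp
  | cons a u ih => simp [ih, Real.rpow_add ht]

-- main reduction
lemma sinh_ms (A B : Multiset ℝ) (hA : ∀ a ∈ A, 0 < a) (hB : ∀ b ∈ B, 0 < b)
    (hcard : Multiset.card A = Multiset.card B)
    (h : ∀ x : ℝ, 0 < x →
      (A.map (fun a => Real.sinh (a * x))).prod = (B.map (fun a => Real.sinh (a * x))).prod) :
    A = B := by
  -- rewrite in terms of t = exp(-2x)
  have main : ∀ t ∈ Set.Ioo (0:ℝ) 1,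
      t ^ (-(A.sum/2)) * (A.map (fun a => (1 - t ^ a) / 2)).prod
        = t ^ (-(B.sum/2)) * (B.map (fun a => (1 - t ^ a) / 2)).prod := by
    intro t ht
    set x : ℝ := -Real.log t / 2 with hx
    have hlt : Real.log t < 0 := Real.log_neg ht.1 ht.2
    have hxpos : 0 < x := by rw [hx]; linarith
    have hsinh : ∀ a : ℝ, Real.sinh (a * x) = t ^ (-(a/2)) * ((1 - t ^ a) / 2) := by
      intro a
      have e1 : Real.exp (a * x) = t ^ (-(a/2)) := by
        rw [Real.rpow_def_of_pos ht.1, hx]; congr 1; ring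
      have e2 : Real.exp (-(a * x)) = t ^ (a/2) := by
        rw [Real.rpow_def_of_pos ht.1, hx]; congr 1; ring
      have e3 : t ^ (-(a/2)) * t ^ a = t ^ (a/2) := by
        rw [← Real.rpow_add ht.1]; congr 1; ring
      rw [Real.sinh_eq, e1, e2, ← e3]
      ring
    have convA : (A.map (fun a => Real.sinh (a * x))).prod
        = t ^ (-(A.sum/2)) * (A.map (fun a => (1 - t ^ a) / 2)).prod := by
      rw [show (fun a => Real.sinh (a * x)) = (fun a => t ^ (-(a/2)) * ((1 - t ^ a)/2))
          from funext hsinh, ms_prod_mul, ms_rpow_sum A t ht.1]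
      congr 2
      rw [show (fun a : ℝ => -(a/2)) = (fun a : ℝ => id a * (-(1:ℝ)/2)) from funext (by intro a; simp; ring),
        ms_sum_mulr, Multiset.map_id]
      ring
    have convB : (B.map (fun a => Real.sinh (a * x))).prod
        = t ^ (-(B.sum/2)) * (B.map (fun a => (1 - t ^ a) / 2)).prod := by
      rw [show (fun a => Real.sinh (a * x)) = (fun a => t ^ (-(a/2)) * ((1 - t ^ a)/2))
          from funext hsinh, ms_prod_mul, ms_rpow_sum B t ht.1]
      congr 2
      rw [show (fun a : ℝ => -(a/2)) = (fun a : ℝ => id a * (-(1:ℝ)/2)) from funext (by intro a; simp; ring),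
        ms_sum_mulr, Multiset.map_id]
      ring
    rw [← convA, ← convB]
    exact h x hxpos
  -- limits of Q's
  set Q : Multiset ℝ → ℝ → ℝ := fun s t => (s.map (fun a => (1 - t ^ a) / 2)).prod with hQdef
  have hQlim : ∀ (s : Multiset ℝ), (∀ a ∈ s, 0 < a) →
      Tendsto (Q s) (𝓝[>] (0:ℝ)) (𝓝 ((1/2 : ℝ) ^ Multiset.card s)) := by
    intro s hs
    have := ms_tendsto_prod s (fun a t => (1 - t ^ a) / 2) (fun _ => (1/2 : ℝ)) (𝓝[>] (0:ℝ))
      (fun a ha => by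
        have h1 : Tendsto (fun t : ℝ => 1 - t ^ a) (𝓝[>] (0:ℝ)) (𝓝 1) := by
          simpa using (tendsto_const_nhds.sub (rpow_tendsto_zero (hs a ha)))
        simpa using h1.div_const 2)
    rw [Multiset.map_const', Multiset.prod_replicate] at this
    exact this
  have hQpos : ∀ (s : Multiset ℝ), (∀ a ∈ s, 0 < a) → ∀ t ∈ Set.Ioo (0:ℝ) 1, 0 < Q s t := by
    intro s hs t ht
    apply Multiset.prod_pos
    intro y hy
    obtain ⟨a, ha, rfl⟩ := Multiset.mem_map.1 hy
    have : t ^ a < 1 := Real.rpow_lt_one (le_of_lt ht.1) ht.2 (hs a ha)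
    linarith
  -- ratio limit
  set μ : ℝ := (A.sum - B.sum)/2 with hμdef
  have hratio : ∀ t ∈ Set.Ioo (0:ℝ) 1, t ^ μ = Q A t / Q B t := by
    intro t ht
    have hmain := main t ht
    have hQB := hQpos B hB t ht
    have ht0 := ht.1
    have e1 : t ^ μ * t ^ (-(A.sum/2)) = t ^ (-(B.sum/2)) := by
      rw [← Real.rpow_add ht0]; congr 1; rw [hμdef]; ring
    have hA0 : t ^ (-(A.sum/2)) ≠ 0 := ne_of_gt (Real.rpow_pos_of_pos ht0 _)
    rw [eq_div_iff (ne_of_gt hQB)]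
    have h2 : t ^ (-(A.sum/2)) * (t ^ μ * Q B t) = t ^ (-(A.sum/2)) * Q A t := by
      calc t ^ (-(A.sum/2)) * (t ^ μ * Q B t) = (t ^ μ * t ^ (-(A.sum/2))) * Q B t := by ring
        _ = t ^ (-(B.sum/2)) * Q B t := by rw [e1]
        _ = t ^ (-(A.sum/2)) * Q A t := hmain.symm
    exact mul_left_cancel₀ hA0 h2
  have hμlim : Tendsto (fun t : ℝ => t ^ μ) (𝓝[>] (0:ℝ)) (𝓝 1) := by
    have hden : ((1/2 : ℝ) ^ Multiset.card B) ≠ 0 := by positivity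
    have := (hQlim A hA).div (hQlim B hB) hden
    rw [hcard] at this
    rw [div_self hden] at this
    refine this.congr' ?_
    filter_upwards [Ioo_mem_nhdsGT_of_mem (by simp : (0:ℝ) ∈ Set.Ico (0:ℝ) 1)] with t ht
    exact (hratio t ht).symm
  -- μ = 0
  have hμ : μ = 0 := by
    rcases lt_trichotomy μ 0 with hlt | heq | hgt
    · exfalso
      have h1 : Tendsto (fun t : ℝ => (t ^ (-μ))⁻¹) (𝓝[>] (0:ℝ)) atTop :=
        (rpow_tendsto_zero' (a := -μ) (by linarith)).inv_tendsto_nhdsGT_zero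
      have h2 : Tendsto (fun t : ℝ => t ^ μ) (𝓝[>] (0:ℝ)) atTop := by
        refine h1.congr' ?_
        filter_upwards [self_mem_nhdsWithin] with t ht
        rw [← Real.rpow_neg (le_of_lt ht), neg_neg]
      exact not_tendsto_atTop_of_tendsto_nhds hμlim h2
    · exact heq
    · exfalso
      have h1 := tendsto_nhds_unique (rpow_tendsto_zero hgt) hμlim
      norm_num at h1
  -- so Q A = Q B on Ioo, then strip /2 and apply key
  have hQeq : ∀ t ∈ Set.Ioo (0:ℝ) 1,
      (A.map (fun a => 1 - t ^ a)).prod = (B.map (fun a => 1 - t ^ a)).prod := by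
    intro t ht
    have hmain := main t ht
    have hsum : A.sum = B.sum := by
      have : A.sum - B.sum = 0 := by
        have := hμ; rw [hμdef] at this; linarith
      linarith
    rw [hsum] at hmain
    have hne : t ^ (-(B.sum/2)) ≠ 0 := ne_of_gt (Real.rpow_pos_of_pos ht.1 _)
    have hQQ : Q A t = Q B t := mul_left_cancel₀ hne hmain
    have conv : ∀ (s : Multiset ℝ),
        Q s t = (s.map (fun a => 1 - t ^ a)).prod * (1/2 : ℝ) ^ Multiset.card s := by
      intro s
      have h1 := ms_prod_mul s (fun a => 1 - t ^ a) (fun _ => (1/2:ℝ))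
      rw [Multiset.map_const', Multiset.prod_replicate] at h1
      rw [← h1]
      show (s.map (fun a => (1 - t ^ a) / 2)).prod = _
      congr 1
      apply Multiset.map_congr rfl
      intro a _
      ring
    rw [conv A, conv B, hcard] at hQQ
    exact mul_right_cancel₀ (by positivity) hQQ
  exact key (Multiset.card A + Multiset.card B) A B le_rfl hA hB hQeq


lemma exists_perm_comp {k : ℕ} (f g : Fin k → ℝ)
    (h : Multiset.map f Finset.univ.val = Multiset.map g Finset.univ.val) :
    ∃ σ : Equiv.Perm (Fin k), ∀ i, f (σ i) = g i := by
  classical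
  have hcoe : ∀ (u : Fin k → ℝ), Multiset.map u Finset.univ.val = ↑(List.ofFn u) := by
    intro u
    rw [Fin.univ_def]
    show Multiset.map u ↑(List.finRange k) = _
    rw [Multiset.map_coe, List.ofFn_eq_map]
  have hperm2 : (List.ofFn f).Perm (List.ofFn g) := by
    rw [← Multiset.coe_eq_coe, ← hcoe, ← hcoe]; exact h
  have hperm : (List.ofFn (f ∘ Tuple.sort f)).Perm (List.ofFn (g ∘ Tuple.sort g)) :=
    (((Tuple.sort f).ofFn_comp_perm f).trans hperm2).trans
      ((Tuple.sort g).ofFn_comp_perm g).symm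
  have heq : f ∘ Tuple.sort f = g ∘ Tuple.sort g :=
    List.ofFn_injective (List.Perm.eq_of_sortedLE
      (Tuple.monotone_sort f).sortedLE_ofFn (Tuple.monotone_sort g).sortedLE_ofFn hperm)
  refine ⟨(Tuple.sort g).symm.trans (Tuple.sort f), fun i => ?_⟩
  have := congrFun heq ((Tuple.sort g).symm i)
  simpa using this

lemma sinh_div_self_pos {y : ℝ} (hy : y ≠ 0) : 0 < Real.sinh y / y := by
  rcases lt_or_gt_of_ne hy with h | h
  · have : Real.sinh y < 0 := by rwa [← Real.sinh_zero, Real.sinh_lt_sinh]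
    exact div_pos_of_neg_of_neg this h
  · have : 0 < Real.sinh y := by rwa [← Real.sinh_zero, Real.sinh_lt_sinh]
    exact div_pos this h


/-- If `∏ sinh(nᵢ x)/sinh(mᵢ x) ≡ 1` for all `x > 0` with all `nᵢ, mᵢ` nonzero, then
the multiset `{nᵢ}` equals `{εᵢ mᵢ}` for some signs `εᵢ = ±1` with `∏ εᵢ = 1`. -/
theorem stmt_1 (k : ℕ) (n m : Fin k → ℝ)
    (hn : ∀ i, n i ≠ 0) (hm : ∀ i, m i ≠ 0)
    (hQ : ∀ x : ℝ, 0 < x →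
      ∏ i, Real.sinh (n i * x) / Real.sinh (m i * x) = 1) :
    ∃ ε : Fin k → ℝ, (∀ i, ε i = 1 ∨ ε i = -1) ∧ (∏ i, ε i = 1) ∧
      (Finset.univ.val.map n = Finset.univ.val.map (fun i => ε i * m i)) := by
  classical
  -- products of sinh are equal
  have hprod : ∀ x : ℝ, 0 < x →
      ∏ i, Real.sinh (n i * x) = ∏ i, Real.sinh (m i * x) := by
    intro x hx
    have hQX := hQ x hx
    rw [Finset.prod_div_distrib] at hQX
    have hm0 : ∏ i, Real.sinh (m i * x) ≠ 0 := by
      rw [Finset.prod_ne_zero_iff]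
      intro i _
      exact Real.sinh_ne_zero.2 (mul_ne_zero (hm i) (ne_of_gt hx))
    rw [div_eq_one_iff_eq hm0] at hQX
    exact hQX
  -- products of sinh of absolute values are equal
  have habsprod : ∀ x : ℝ, 0 < x →
      ∏ i, Real.sinh (|n i| * x) = ∏ i, Real.sinh (|m i| * x) := by
    intro x hx
    have h1 := congrArg abs (hprod x hx)
    rw [Finset.abs_prod, Finset.abs_prod] at h1
    have habs : ∀ (u : Fin k → ℝ) i, |Real.sinh (u i * x)| = Real.sinh (|u i| * x) := by
      intro u i
      rw [Real.abs_sinh, abs_mul, abs_of_pos hx]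
    simp only [habs] at h1
    exact h1
  -- multiset equality of absolute values
  have habs : Multiset.map (fun i => |n i|) Finset.univ.val
      = Multiset.map (fun i => |m i|) Finset.univ.val := by
    apply sinh_ms
    · intro a ha
      obtain ⟨i, _, rfl⟩ := Multiset.mem_map.1 ha
      exact abs_pos.2 (hn i)
    · intro b hb
      obtain ⟨i, _, rfl⟩ := Multiset.mem_map.1 hb
      exact abs_pos.2 (hm i)
    · simp
    · intro x hx
      rw [Multiset.map_map, Multiset.map_map]
      exact habsprod x hx
  obtain ⟨σ, hσ⟩ := exists_perm_comp (fun i => |n i|) (fun i => |m i|) habs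
  set ε : Fin k → ℝ := fun i => n (σ i) / m i with hεdef
  have hεabs : ∀ i, |ε i| = 1 := by
    intro i
    rw [hεdef]
    simp only [abs_div]
    rw [hσ i, div_self (abs_ne_zero.2 (hm i))]
  have hε1 : ∀ i, ε i = 1 ∨ ε i = -1 := fun i => (abs_eq (by norm_num)).1 (hεabs i)
  have hεm : ∀ i, ε i * m i = n (σ i) := fun i => div_mul_cancel₀ _ (hm i)
  refine ⟨ε, hε1, ?_, ?_⟩
  · -- product of signs is one
    have hprodε : ∏ i, ε i = (∏ i, n i) / (∏ i, m i) := by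
      rw [hεdef]
      rw [Finset.prod_div_distrib]
      congr 1
      exact Equiv.prod_comp σ n
    -- absolute value of the ratio is 1
    have habs1 : |(∏ i, n i) / (∏ i, m i)| = 1 := by
      have h2 : ∏ i, |n i| = ∏ i, |m i| := by
        have := congrArg Multiset.prod habs
        simpa [Finset.prod] using this
      have h3 : |∏ i, n i| = |∏ i, m i| := by
        rw [Finset.abs_prod, Finset.abs_prod]; exact h2
      rw [abs_div, h3, div_self (abs_ne_zero.2 (Finset.prod_ne_zero_iff.2 fun i _ => hm i))]
    -- positivity of the ratio
    have hpos : 0 < (∏ i, n i) / (∏ i, m i) := by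
      have h1 := hQ 1 one_pos
      simp only [mul_one] at h1
      have hterm : ∀ i, Real.sinh (n i) / Real.sinh (m i)
          = (n i / m i) * ((Real.sinh (n i) / n i) * (m i / Real.sinh (m i))) := by
        intro i
        have h4 : Real.sinh (m i) ≠ 0 := Real.sinh_ne_zero.2 (hm i)
        field_simp [hn i, hm i, h4]
      rw [Finset.prod_congr rfl (fun i _ => hterm i), Finset.prod_mul_distrib] at h1
      have hpos2 : 0 < ∏ i, (Real.sinh (n i) / n i) * (m i / Real.sinh (m i)) := by
        apply Finset.prod_pos
        intro i _
        apply mul_pos (sinh_div_self_pos (hn i))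
        have h3 := sinh_div_self_pos (hm i)
        have h4 : Real.sinh (m i) ≠ 0 := Real.sinh_ne_zero.2 (hm i)
        rw [div_pos_iff] at h3 ⊢
        rcases h3 with ⟨ha, hb⟩ | ⟨ha, hb⟩
        · exact Or.inl ⟨hb, ha⟩
        · exact Or.inr ⟨hb, ha⟩
      have h5 : 0 < ∏ i, n i / m i := by
        by_contra hcon
        push_neg at hcon
        nlinarith [h1, hpos2, mul_nonpos_of_nonpos_of_nonneg hcon (le_of_lt hpos2)]
      rwa [Finset.prod_div_distrib] at h5
    rw [hprodε]
    rcases (abs_eq (by norm_num : (0:ℝ) ≤ 1)).1 habs1 with h | h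
    · exact h
    · linarith
  · -- multiset equality
    have h1 : Finset.univ.val.map (fun i => ε i * m i) = Finset.univ.val.map (fun i => n (σ i)) :=
      Multiset.map_congr rfl fun i _ => hεm i
    rw [h1]
    have h2 : Finset.univ.val.map (fun i => n (σ i)) = (Finset.univ.val.map σ).map n := by
      rw [Multiset.map_map]; rfl
    rw [h2]
    congr 1
    have h3 : Finset.univ.val.map (fun i => σ i) = (Finset.univ.map σ.toEmbedding).val := by
      rw [Finset.map_val]; rfl
    rw [show (Finset.univ.val.map σ) = (Finset.univ.map σ.toEmbedding).val from h3,
      Finset.map_univ_equiv]
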